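/- There is an absolute constant C > 0 such that the following holds. Fix a power of two n ≥ 2, a positive integer d, N = n^d, and an integer k with 1 ≤ k ≤ N. Let S be a Bernoulli set with rate k/N in (ZMod n)^d. Let B = (B_1,…,B_d) and B' = (B'_1,…,B'_d) be vectors of powers of two with B'_q | B_q | n for every q and with |B|·|B'| ≥ k². Then with probability at least 1 − 1/N³ the following event occurs: for every b ∈ [B'], the number of f ∈ S^(B) with f mod B' = b is at most C·log₂ N. -/

import Mathlib

open scoped BigOperators ENNReal
open MeasureTheory

section Aux

open scoped Classical

/-- Measure of a cylinder set under the Bernoulli product measure. -/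
theorem bern_cylinder_measure {ι : Type*} [Fintype ι] (p : ℝ≥0∞) (hp : p ≤ 1) (T : Finset ι) :
    (Measure.pi fun _ : ι => (1 - p) • Measure.dirac false + p • Measure.dirac true)
      {ω : ι → Bool | ∀ x ∈ T, ω x = true} = p ^ T.card := by
  haveI : ∀ x : ι, IsFiniteMeasure ((1 - p) • (Measure.dirac false)
      + p • (Measure.dirac (true : Bool))) := by
    intro x
    constructor
    simp only [Measure.add_apply, Measure.smul_apply, smul_eq_mul]
    calc (1 - p) * Measure.dirac false Set.univ + p * Measure.dirac true Set.univ
        ≤ 1 * 1 + 1 * 1 := by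
          gcongr <;> simp [tsub_le_iff_right, hp, measure_mono (Set.subset_univ _)]
      _ < ⊤ := by norm_num
  have hset : {ω : ι → Bool | ∀ x ∈ T, ω x = true} =
      Set.pi Set.univ (fun x => if x ∈ T then {true} else Set.univ) := by
    ext ω
    simp only [Set.mem_setOf_eq, Set.mem_pi, Set.mem_univ, forall_true_left]
    constructor
    · intro h x
      by_cases hx : x ∈ T <;> simp [hx, h]
    · intro h x hx
      have := h x
      simpa [hx] using this
  rw [hset, Measure.pi_pi]
  have hfac : ∀ x : ι, ((1 - p) • Measure.dirac false + p • Measure.dirac true)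
      (if x ∈ T then ({true} : Set Bool) else Set.univ) = if x ∈ T then p else 1 := by
    intro x
    by_cases hx : x ∈ T <;>
      simp [hx, Measure.dirac_apply', tsub_add_cancel_of_le hp]
  simp_rw [hfac]
  rw [Finset.prod_ite_mem, Finset.univ_inter, Finset.prod_const, Finset.card_def]

theorem card_eq_card_mul_ker {G H : Type*} [Fintype G] [Fintype H] [AddGroup G] [AddGroup H]
    (f : G → H) (hsub : ∀ a b, f (a - b) = f a - f b) (hsurj : Function.Surjective f) :
    Fintype.card G = Fintype.card H * (Finset.univ.filter fun x => f x = 0).card := by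
  have hcard : ∀ y : H, (Finset.univ.filter fun x => f x = y).card
      = (Finset.univ.filter fun x => f x = 0).card := by
    intro y
    obtain ⟨x₀, hx₀⟩ := hsurj y
    apply Finset.card_bij (fun x _ => x - x₀)
    · intro a ha
      simp only [Finset.mem_filter, Finset.mem_univ, true_and] at ha ⊢
      rw [hsub, ha, hx₀, sub_self]
    · intro a ha b hb hab
      simpa using sub_left_injective hab
    · intro b hb
      refine ⟨b + x₀, ?_, by simp⟩
      simp only [Finset.mem_filter, Finset.mem_univ, true_and] at hb ⊢
      have h1 : f (b + x₀ - x₀) = f (b + x₀) - f x₀ := hsub _ _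
      rw [add_sub_cancel_right, hb, eq_comm, sub_eq_zero] at h1
      rw [h1, hx₀]
  have := Finset.card_eq_sum_card_fiberwise
    (f := f) (s := Finset.univ) (t := Finset.univ) (fun x _ => Finset.mem_univ _)
  rw [Finset.card_univ] at this
  rw [this]
  rw [Finset.sum_congr rfl (fun y _ => hcard y), Finset.sum_const, Finset.card_univ,
    smul_eq_mul]

end Aux

theorem stmt13 : ∃ C : ℝ, 0 < C ∧
    ∀ (m : ℕ), 1 ≤ m → ∀ (n : ℕ), n = 2 ^ m → ∀ [NeZero n],
    ∀ (d : ℕ), 1 ≤ d → ∀ (k : ℕ), 1 ≤ k → k ≤ n ^ d →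
    ∀ (B B' : Fin d → ℕ),
      (∀ q, ∃ e : ℕ, B q = 2 ^ e) → (∀ q, ∃ e : ℕ, B' q = 2 ^ e) →
      ∀ (hB'B : ∀ q, B' q ∣ B q) (hB : ∀ q, B q ∣ n),
      k ^ 2 ≤ (∏ q, B q) * (∏ q, B' q) →
    ∀ (μ : Measure ((Fin d → ZMod n) → Bool)),
      μ = (Measure.pi fun _ : Fin d → ZMod n =>
        (1 - (k : ℝ≥0∞) / ((n : ℝ≥0∞) ^ d)) • Measure.dirac false +
          ((k : ℝ≥0∞) / ((n : ℝ≥0∞) ^ d)) • Measure.dirac true) →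
    1 - 1 / ((n : ℝ≥0∞) ^ d) ^ 3 ≤
      μ {ω | ∀ b : ∀ q, ZMod (B' q),
        (({f : ∀ q, ZMod (B q) |
            (∃ g h : Fin d → ZMod n, g ≠ h ∧ ω g = true ∧ ω h = true ∧
              (∀ q, ZMod.castHom (hB q) (ZMod (B q)) (g q) = f q) ∧
              (∀ q, ZMod.castHom (hB q) (ZMod (B q)) (h q) = f q)) ∧
            (∀ q, ZMod.castHom (hB'B q) (ZMod (B' q)) (f q) = b q)}.ncard : ℝ))
          ≤ C * Real.logb 2 ((n : ℝ) ^ d)} := by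
  classical
  refine ⟨5, by norm_num, ?_⟩
  intro m hm n hn _ d hd k hk1 hkN B B' hBpow hB'pow hB'B hB hk2 μ hμ
  haveI hBz : ∀ q, NeZero (B q) := fun q => ⟨by
    obtain ⟨e, he⟩ := hBpow q; simp [he]⟩
  haveI hB'z : ∀ q, NeZero (B' q) := fun q => ⟨by
    obtain ⟨e, he⟩ := hB'pow q; simp [he]⟩
  -- basic quantities
  set p : ℝ≥0∞ := (k : ℝ≥0∞) / ((n : ℝ≥0∞) ^ d) with hp_def
  have hn0 : (n : ℕ) ≠ 0 := NeZero.ne n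
  have hNn0 : (n : ℕ) ^ d ≠ 0 := pow_ne_zero _ hn0
  have hNcast : ((n : ℝ≥0∞)) ^ d = ((n ^ d : ℕ) : ℝ≥0∞) := by push_cast; ring
  have hp1 : p ≤ 1 := by
    rw [hp_def, hNcast, ENNReal.div_le_iff (by exact_mod_cast hNn0) (by finiteness), one_mul]
    exact_mod_cast hkN
  set t : ℕ := 4 * (m * d) + 1 with ht_def
  -- the reduction maps
  set φ : (Fin d → ZMod n) → (∀ q, ZMod (B q)) := fun g q => ZMod.castHom (hB q) (ZMod (B q)) (g q) with hφ
  set φ' : (∀ q, ZMod (B q)) → (∀ q, ZMod (B' q)) := fun f q => ZMod.castHom (hB'B q) (ZMod (B' q)) (f q) with hφ'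
  have hφsub : ∀ a b : Fin d → ZMod n, φ (a - b) = φ a - φ b := by
    intro a b; funext q
    exact map_sub (ZMod.castHom (hB q) (ZMod (B q))) (a q) (b q)
  have hφ'sub : ∀ a b : ∀ q, ZMod (B q), φ' (a - b) = φ' a - φ' b := by
    intro a b; funext q
    exact map_sub (ZMod.castHom (hB'B q) (ZMod (B' q))) (a q) (b q)
  have hφsurj : Function.Surjective φ := by
    intro f
    have : ∀ q, ∃ x : ZMod n, ZMod.castHom (hB q) (ZMod (B q)) x = f q := by
      intro q
      obtain ⟨a, ha⟩ := ZMod.natCast_zmod_surjective (f q)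
      exact ⟨(a : ZMod n), by rw [map_natCast, ha]⟩
    choose g hg using this
    exact ⟨g, funext hg⟩
  have hφ'surj : Function.Surjective φ' := by
    intro f
    have : ∀ q, ∃ x : ZMod (B q), ZMod.castHom (hB'B q) (ZMod (B' q)) x = f q := by
      intro q
      obtain ⟨a, ha⟩ := ZMod.natCast_zmod_surjective (f q)
      exact ⟨(a : ZMod (B q)), by rw [map_natCast, ha]⟩
    choose g hg using this
    exact ⟨g, funext hg⟩
  set ψ : (Fin d → ZMod n) → (∀ q, ZMod (B' q)) := fun g => φ' (φ g) with hψ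
  have hψsub : ∀ a b : Fin d → ZMod n, ψ (a - b) = ψ a - ψ b := by
    intro a b; rw [hψ]; simp only [hφsub, hφ'sub]
  have hψsurj : Function.Surjective ψ := hφ'surj.comp hφsurj
  -- cardinalities
  have hcardG : Fintype.card (Fin d → ZMod n) = n ^ d := by
    simp [ZMod.card]
  have hcardH : Fintype.card (∀ q, ZMod (B q)) = ∏ q, B q := by
    simp [ZMod.card]
  have hcardH' : Fintype.card (∀ q, ZMod (B' q)) = ∏ q, B' q := by
    simp [ZMod.card]
  set KB := (Finset.univ.filter fun x : Fin d → ZMod n => φ x = 0) with hKB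
  set Kψ := (Finset.univ.filter fun x : Fin d → ZMod n => ψ x = 0) with hKψ
  have hKBcard : Fintype.card (Fin d → ZMod n) = (∏ q, B q) * KB.card := by
    rw [← hcardH, hKB]
    have := card_eq_card_mul_ker φ hφsub hφsurj
    convert this using 3
    exact Finset.filter_congr_decidable .. |>.symm
  have hKψcard : Fintype.card (Fin d → ZMod n) = (∏ q, B' q) * Kψ.card := by
    rw [← hcardH', hKψ]
    have := card_eq_card_mul_ker ψ hψsub hψsurj
    convert this using 3
    exact Finset.filter_congr_decidable .. |>.symm
  -- the linear order used to order pairs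
  set e := Fintype.equivFin (Fin d → ZMod n) with he
  -- pair sets
  set Q : (∀ q, ZMod (B' q)) → Finset ((Fin d → ZMod n) × (Fin d → ZMod n)) := fun b =>
    Finset.univ.filter fun gh => φ gh.1 = φ gh.2 ∧ φ' (φ gh.1) = b with hQ
  set P : (∀ q, ZMod (B' q)) → Finset ((Fin d → ZMod n) × (Fin d → ZMod n)) := fun b =>
    Finset.univ.filter fun gh => φ gh.1 = φ gh.2 ∧ φ' (φ gh.1) = b ∧ e gh.1 < e gh.2 with hP
  have hPQ : ∀ b, 2 * (P b).card ≤ (Q b).card := by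
    intro b
    have hPsubQ : P b ⊆ Q b := by
      intro x hx
      simp only [hP, hQ, Finset.mem_filter, Finset.mem_univ, true_and] at hx ⊢
      exact ⟨hx.1, hx.2.1⟩
    have hswapsubQ : (P b).image Prod.swap ⊆ Q b := by
      intro x hx
      simp only [Finset.mem_image] at hx
      obtain ⟨y, hy, rfl⟩ := hx
      simp only [hP, hQ, Finset.mem_filter, Finset.mem_univ, true_and] at hy ⊢
      exact ⟨hy.1.symm, hy.1 ▸ hy.2.1⟩
    have hdisj : Disjoint (P b) ((P b).image Prod.swap) := by
      rw [Finset.disjoint_left]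
      intro x hx hx'
      simp only [Finset.mem_image] at hx'
      obtain ⟨y, hy, rfl⟩ := hx'
      simp only [hP, Finset.mem_filter, Finset.mem_univ, true_and,
        Prod.fst_swap, Prod.snd_swap] at hx hy
      exact absurd hy.2.2 (asymm hx.2.2)
    calc 2 * (P b).card = (P b).card + ((P b).image Prod.swap).card := by
          rw [Finset.card_image_of_injective _ Prod.swap_injective]; ring
      _ = ((P b) ∪ (P b).image Prod.swap).card :=
          (Finset.card_union_of_disjoint hdisj).symm
      _ ≤ (Q b).card := Finset.card_le_card (Finset.union_subset hPsubQ hswapsubQ)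
  have hQK : ∀ b, (Q b).card ≤ Kψ.card * KB.card := by
    intro b
    obtain ⟨g₀, hg₀⟩ := hψsurj b
    have : (Q b).card ≤ (Kψ ×ˢ KB).card := by
      apply Finset.card_le_card_of_injOn (fun gh => (gh.1 - g₀, gh.2 - gh.1))
      · intro gh hgh
        simp only [hQ, Finset.mem_coe, Finset.mem_filter, Finset.mem_univ, true_and] at hgh
        simp only [Finset.mem_coe, Finset.mem_product, hKψ, hKB, Finset.mem_filter, Finset.mem_univ, true_and]
        constructor
        · rw [hψsub, hg₀]
          have : ψ gh.1 = b := hgh.2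
          rw [this, sub_self]
        · rw [hφsub, hgh.1, sub_self]
      · intro a _ b' _ hab
        simp only [Prod.mk.injEq] at hab
        have h1 : a.1 = b'.1 := by
          have := hab.1; exact sub_left_injective this
        have h2 : a.2 = b'.2 := by
          have := hab.2; rw [h1] at this; exact sub_left_injective this
        exact Prod.ext h1 h2
    simpa [Finset.card_product] using this
  -- key numeric bound : (P b).card * p^2 ≤ 1/2
  have hPbound : ∀ b, ((P b).card : ℝ≥0∞) * p ^ 2 ≤ 2⁻¹ := by
    intro b
    have hnat : 2 * (P b).card * k ^ 2 ≤ (n ^ d) ^ 2 := by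
      calc 2 * (P b).card * k ^ 2 ≤ (Q b).card * ((∏ q, B q) * (∏ q, B' q)) :=
            Nat.mul_le_mul (hPQ b) hk2
        _ ≤ (Kψ.card * KB.card) * ((∏ q, B q) * (∏ q, B' q)) :=
            Nat.mul_le_mul_right _ (hQK b)
        _ = ((∏ q, B q) * KB.card) * ((∏ q, B' q) * Kψ.card) := by ring
        _ = (n ^ d) ^ 2 := by rw [← hKBcard, ← hKψcard, hcardG]; ring
    have hcast : ((2 : ℝ≥0∞)) * ((P b).card : ℝ≥0∞) * (k : ℝ≥0∞) ^ 2
        ≤ ((n ^ d : ℕ) : ℝ≥0∞) ^ 2 := by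
      have := (Nat.cast_le (α := ℝ≥0∞)).2 hnat
      push_cast at this ⊢
      convert this using 2 <;> ring
    have hNne : ((n ^ d : ℕ) : ℝ≥0∞) ≠ 0 := Nat.cast_ne_zero.2 hNn0
    have hNnetop : ((n ^ d : ℕ) : ℝ≥0∞) ≠ ⊤ := ENNReal.natCast_ne_top _
    have hp2 : p ^ 2 = (k : ℝ≥0∞) ^ 2 / ((n ^ d : ℕ) : ℝ≥0∞) ^ 2 := by
      rw [hp_def, hNcast, div_eq_mul_inv, mul_pow, ← ENNReal.inv_pow, ← div_eq_mul_inv]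
    rw [hp2, ← mul_div_assoc,
      ENNReal.div_le_iff (pow_ne_zero _ hNne) (ENNReal.pow_ne_top hNnetop)]
    calc ((P b).card : ℝ≥0∞) * (k : ℝ≥0∞) ^ 2
        = 2⁻¹ * (2 * ((P b).card : ℝ≥0∞) * (k : ℝ≥0∞) ^ 2) := by
          rw [← mul_assoc, ← mul_assoc, ENNReal.inv_mul_cancel (by norm_num) (by norm_num),
            one_mul]
      _ ≤ 2⁻¹ * (((n ^ d : ℕ) : ℝ≥0∞) ^ 2) := by gcongr
  -- admissible tuples of pairs
  set 𝒜 : (∀ q, ZMod (B' q)) → Finset (Fin t → (Fin d → ZMod n) × (Fin d → ZMod n)) := fun b =>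
    Finset.univ.filter fun A =>
      (∀ i, φ (A i).1 = φ (A i).2 ∧ φ' (φ (A i).1) = b ∧ e (A i).1 < e (A i).2) ∧
      Function.Injective fun i => φ (A i).1 with h𝒜
  have h𝒜card : ∀ b, (𝒜 b).card ≤ (P b).card ^ t := by
    intro b
    have hsub : 𝒜 b ⊆ Fintype.piFinset (fun _ : Fin t => P b) := by
      intro A hA
      simp only [h𝒜, Finset.mem_filter, Finset.mem_univ, true_and] at hA
      rw [Fintype.mem_piFinset]
      intro i
      simp only [hP, Finset.mem_filter, Finset.mem_univ, true_and]
      exact hA.1 i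
    calc (𝒜 b).card ≤ (Fintype.piFinset (fun _ : Fin t => P b)).card :=
          Finset.card_le_card hsub
      _ = (P b).card ^ t := Fintype.card_piFinset_const _ _
  -- the events
  set TF : (Fin t → (Fin d → ZMod n) × (Fin d → ZMod n)) → Finset (Fin d → ZMod n) := fun A =>
    Finset.univ.image (fun x : Fin t × Bool => if x.2 then (A x.1).2 else (A x.1).1) with hTF
  set E : (Fin t → (Fin d → ZMod n) × (Fin d → ZMod n)) → Set ((Fin d → ZMod n) → Bool) :=
    fun A => {ω | ∀ x ∈ TF A, ω x = true} with hE
  have hTFcard : ∀ b, ∀ A ∈ 𝒜 b, (TF A).card = t * 2 := by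
    intro b A hA
    simp only [h𝒜, Finset.mem_filter, Finset.mem_univ, true_and] at hA
    rw [hTF]
    rw [Finset.card_image_of_injOn, Finset.card_univ, Fintype.card_prod, Fintype.card_fin,
      Fintype.card_bool]
    rintro ⟨i, c⟩ _ ⟨j, c'⟩ _ hxy
    simp only at hxy
    have hφx : ∀ (i : Fin t) (c : Bool),
        φ (if c then (A i).2 else (A i).1) = φ (A i).1 := by
      intro i c
      cases c <;> simp [(hA.1 i).1.symm]
    have hij : i = j := by
      apply hA.2
      show φ (A i).1 = φ (A j).1
      rw [← hφx i c, ← hφx j c', hxy]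
    subst hij
    have hne : (A i).1 ≠ (A i).2 := by
      intro hcon
      have := (hA.1 i).2.2
      rw [hcon] at this
      exact lt_irrefl _ this
    have hcc : c = c' := by
      cases c <;> cases c'
      · rfl
      · simp only [Bool.false_eq_true, ↓reduceIte] at hxy
        exact absurd hxy hne
      · simp only [Bool.false_eq_true, ↓reduceIte] at hxy
        exact absurd hxy.symm hne
      · rfl
    rw [hcc]
  have hEmeas : ∀ b, ∀ A ∈ 𝒜 b, μ (E A) = p ^ (t * 2) := by
    intro b A hA
    rw [hμ, hE]
    rw [bern_cylinder_measure p hp1 (TF A), hTFcard b A hA]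
  -- the bad event
  set Bad : Set ((Fin d → ZMod n) → Bool) :=
    ⋃ b ∈ (Finset.univ : Finset (∀ q, ZMod (B' q))), ⋃ A ∈ 𝒜 b, E A with hBad
  have hmd1 : 1 ≤ m * d := Nat.one_le_iff_ne_zero.2 (by positivity)
  have hBadBound : μ Bad ≤ 1 / ((n : ℝ≥0∞) ^ d) ^ 3 := by
    have h2cast : ((n : ℕ) : ℝ≥0∞) = (2 : ℝ≥0∞) ^ m := by
      rw [hn]; push_cast; ring
    calc μ Bad ≤ ∑ b ∈ (Finset.univ : Finset (∀ q, ZMod (B' q))), μ (⋃ A ∈ 𝒜 b, E A) :=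
          measure_biUnion_finset_le _ _
      _ ≤ ∑ b : (∀ q, ZMod (B' q)), ∑ A ∈ 𝒜 b, μ (E A) :=
          Finset.sum_le_sum fun b _ => measure_biUnion_finset_le _ _
      _ = ∑ b : (∀ q, ZMod (B' q)), ((𝒜 b).card : ℝ≥0∞) * p ^ (t * 2) := by
          refine Finset.sum_congr rfl fun b _ => ?_
          rw [Finset.sum_congr rfl (fun A hA => hEmeas b A hA), Finset.sum_const,
            nsmul_eq_mul]
      _ ≤ ∑ _b : (∀ q, ZMod (B' q)), (2 : ℝ≥0∞)⁻¹ ^ t := by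
          refine Finset.sum_le_sum fun b _ => ?_
          calc ((𝒜 b).card : ℝ≥0∞) * p ^ (t * 2)
              ≤ (((P b).card ^ t : ℕ) : ℝ≥0∞) * p ^ (t * 2) := by
                gcongr
                exact_mod_cast h𝒜card b
            _ = (((P b).card : ℝ≥0∞) * p ^ 2) ^ t := by
                push_cast
                rw [mul_comm t 2, pow_mul, ← mul_pow]
            _ ≤ (2 : ℝ≥0∞)⁻¹ ^ t := by
                gcongr
                exact hPbound b
      _ = (Fintype.card (∀ q, ZMod (B' q)) : ℝ≥0∞) * (2 : ℝ≥0∞)⁻¹ ^ t := by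
          rw [Finset.sum_const, Finset.card_univ, nsmul_eq_mul]
      _ ≤ ((n ^ d : ℕ) : ℝ≥0∞) * (2 : ℝ≥0∞)⁻¹ ^ t := by
          gcongr
          rw [hcardH']
          have h1 : ∏ q, B' q ≤ ∏ _q : Fin d, n :=
            Finset.prod_le_prod' fun q _ => Nat.le_of_dvd (Nat.pos_of_ne_zero hn0)
              ((hB'B q).trans (hB q))
          have h2 : ∏ _q : Fin d, n = n ^ d := by
            rw [Finset.prod_const, Finset.card_univ, Fintype.card_fin]
          exact_mod_cast h1.trans (le_of_eq h2)
      _ ≤ 1 / ((n : ℝ≥0∞) ^ d) ^ 3 := by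
          rw [← hNcast, ht_def]
          have hne2 : (2 : ℝ≥0∞) ≠ 0 := by norm_num
          have hnetop2 : (2 : ℝ≥0∞) ≠ ⊤ := by norm_num
          have hpowe : ((n : ℝ≥0∞)) ^ d = (2 : ℝ≥0∞) ^ (m * d) := by
            rw [h2cast, ← pow_mul]
          rw [hpowe]
          have hsplit : (4 * (m * d) + 1) = (m * d) + (3 * (m * d)) + 1 := by ring
          rw [hsplit, pow_add, pow_add, ← mul_assoc, ← mul_assoc, ← mul_pow,
            ENNReal.mul_inv_cancel hne2 hnetop2, one_pow, one_mul, pow_one,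
            ← pow_mul, one_div, ← ENNReal.inv_pow]
          calc ((2 : ℝ≥0∞) ^ (3 * (m * d)))⁻¹ * 2⁻¹
              ≤ ((2 : ℝ≥0∞) ^ (3 * (m * d)))⁻¹ * 1 := by
                gcongr
                exact ENNReal.inv_le_one.2 one_le_two
            _ = ((2 : ℝ≥0∞) ^ (3 * (m * d)))⁻¹ := mul_one _
            _ = ((2 : ℝ≥0∞) ^ (m * d * 3))⁻¹ := by ring_nf
  -- covering : outside Bad, the good event holds
  have hcover : ∀ ω, ω ∉ Bad → ∀ b : ∀ q, ZMod (B' q),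
      (({f : ∀ q, ZMod (B q) |
          (∃ g h : Fin d → ZMod n, g ≠ h ∧ ω g = true ∧ ω h = true ∧
            (∀ q, ZMod.castHom (hB q) (ZMod (B q)) (g q) = f q) ∧
            (∀ q, ZMod.castHom (hB q) (ZMod (B q)) (h q) = f q)) ∧
          (∀ q, ZMod.castHom (hB'B q) (ZMod (B' q)) (f q) = b q)}.ncard : ℝ))
        ≤ 5 * Real.logb 2 ((n : ℝ) ^ d) := by
    intro ω hω b
    by_contra hcount
    push_neg at hcount
    set Sb := {f : ∀ q, ZMod (B q) |
        (∃ g h : Fin d → ZMod n, g ≠ h ∧ ω g = true ∧ ω h = true ∧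
          (∀ q, ZMod.castHom (hB q) (ZMod (B q)) (g q) = f q) ∧
          (∀ q, ZMod.castHom (hB q) (ZMod (B q)) (h q) = f q)) ∧
        (∀ q, ZMod.castHom (hB'B q) (ZMod (B' q)) (f q) = b q)} with hSb
    have hlogb : Real.logb 2 ((n : ℝ) ^ d) = (m * d : ℕ) := by
      rw [hn]
      push_cast
      rw [← pow_mul, Real.logb_pow, Real.logb_self_eq_one (by norm_num), mul_one]
      push_cast; ring
    have hcount' : t ≤ Sb.ncard := by
      have h5 : (5 * (m * d) : ℕ) < Sb.ncard := by
        have : ((5 * (m * d) : ℕ) : ℝ) < (Sb.ncard : ℝ) := by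
          rw [hlogb] at hcount
          push_cast
          push_cast at hcount; linarith
        exact_mod_cast this
      have ht5 : t ≤ 5 * (m * d) := by rw [ht_def]; omega
      omega
    obtain ⟨s, hsSb, hscard⟩ := Set.exists_subset_card_eq hcount'
    have hsfin : s.Finite := Set.toFinite s
    have hsFcard : Fintype.card hsfin.toFinset = t := by
      rw [Fintype.card_coe, ← hscard, Set.ncard_eq_toFinset_card s hsfin]
    set eqv := Fintype.equivFinOfCardEq hsFcard with heqv
    set F : Fin t → (∀ q, ZMod (B q)) := fun i => ((eqv.symm i : hsfin.toFinset) : _) with hF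
    have hFinj : Function.Injective F := by
      intro i j hij
      exact (Equiv.injective eqv.symm (Subtype.coe_injective hij))
    have hFmem : ∀ i, F i ∈ Sb := by
      intro i
      exact hsSb (hsfin.mem_toFinset.1 (eqv.symm i).2)
    have hb' : ∀ i, φ' (F i) = b := fun i => funext (hFmem i).2
    have hex : ∀ i, ∃ gh : (Fin d → ZMod n) × (Fin d → ZMod n),
        e gh.1 < e gh.2 ∧ ω gh.1 = true ∧ ω gh.2 = true ∧ φ gh.1 = F i ∧ φ gh.2 = F i := by
      intro i
      obtain ⟨⟨g, h, hne, hωg, hωh, hgf, hhf⟩, -⟩ := hFmem i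
      have hφg : φ g = F i := funext hgf
      have hφh : φ h = F i := funext hhf
      rcases lt_or_gt_of_ne (fun hgh : e g = e h => hne (e.injective hgh)) with hlt | hgt
      · exact ⟨(g, h), hlt, hωg, hωh, hφg, hφh⟩
      · exact ⟨(h, g), hgt, hωh, hωg, hφh, hφg⟩
    choose A hA1 hA2 hA3 hA4 hA5 using hex
    have hmemA : A ∈ 𝒜 b := by
      simp only [h𝒜, Finset.mem_filter, Finset.mem_univ, true_and]
      refine ⟨fun i => ⟨?_, ?_, hA1 i⟩, ?_⟩
      · rw [hA4 i, hA5 i]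
      · rw [hA4 i]; exact hb' i
      · intro i j hij
        apply hFinj
        rw [← hA4 i, ← hA4 j]
        exact hij
    have hωE : ω ∈ E A := by
      rw [hE]
      intro x hx
      simp only [hTF, Finset.mem_image, Finset.mem_univ, true_and] at hx
      obtain ⟨z, hz⟩ := hx
      by_cases hz2 : z.2
      · rw [← hz]; simp only [hz2, if_true]; exact hA3 z.1
      · rw [← hz]; simp only [hz2, if_false]; exact hA2 z.1
    apply hω
    rw [hBad]
    simp only [Set.mem_iUnion]
    exact ⟨b, Finset.mem_univ b, A, hmemA, hωE⟩
  -- conclusion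
  haveI hfacprob : ∀ x : Fin d → ZMod n, IsProbabilityMeasure
      ((1 - p) • (Measure.dirac false) + p • (Measure.dirac (true : Bool))) := by
    intro x
    constructor
    simp only [Measure.add_apply, Measure.smul_apply, smul_eq_mul, measure_univ, mul_one]
    exact tsub_add_cancel_of_le hp1
  have hμuniv : μ Set.univ = 1 := by
    rw [hμ]
    haveI : IsProbabilityMeasure (Measure.pi fun _ : Fin d → ZMod n =>
        (1 - p) • (Measure.dirac false) + p • (Measure.dirac (true : Bool))) :=
      inferInstance
    exact measure_univ
  set Good := {ω : (Fin d → ZMod n) → Bool | ∀ b : ∀ q, ZMod (B' q),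
      (({f : ∀ q, ZMod (B q) |
          (∃ g h : Fin d → ZMod n, g ≠ h ∧ ω g = true ∧ ω h = true ∧
            (∀ q, ZMod.castHom (hB q) (ZMod (B q)) (g q) = f q) ∧
            (∀ q, ZMod.castHom (hB q) (ZMod (B q)) (h q) = f q)) ∧
          (∀ q, ZMod.castHom (hB'B q) (ZMod (B' q)) (f q) = b q)}.ncard : ℝ))
        ≤ 5 * Real.logb 2 ((n : ℝ) ^ d)} with hGood
  have huniv : (Set.univ : Set ((Fin d → ZMod n) → Bool)) ⊆ Good ∪ Bad := by
    intro ω _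
    by_cases hω : ω ∈ Bad
    · exact Or.inr hω
    · exact Or.inl (hcover ω hω)
  have h1 : (1 : ℝ≥0∞) ≤ μ Good + μ Bad := by
    calc (1 : ℝ≥0∞) = μ Set.univ := hμuniv.symm
      _ ≤ μ (Good ∪ Bad) := measure_mono huniv
      _ ≤ μ Good + μ Bad := measure_union_le _ _
  have h2 : (1 : ℝ≥0∞) ≤ μ Good + 1 / ((n : ℝ≥0∞) ^ d) ^ 3 :=
    h1.trans (by gcongr)
  exact tsub_le_iff_right.2 h2
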